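/- If a polynomial differential k-form ω on ℝ^n lies both in the image of the Koszul operator κ (applied to polynomial (k+1)-forms) and in the image of the exterior derivative d (applied to polynomial (k−1)-forms), then ω = 0. -/

import Mathlib

open MvPolynomial

/-- Polynomial differential forms on `ℝ^n`: a family of polynomial coefficients indexed by
subsets `σ ⊆ {1,…,n}`; a `k`-form is supported on sets of cardinality `k`. -/
abbrev PolyForm (n : ℕ) := Finset (Fin n) → MvPolynomial (Fin n) ℝ

/-- The sign `(-1)^{#{j ∈ σ : j < i}}`. -/
noncomputable def sgn {n : ℕ} (σ : Finset (Fin n)) (i : Fin n) : MvPolynomial (Fin n) ℝ :=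
  (-1) ^ (σ.filter (fun j => j < i)).card

/-- The exterior derivative `d`. -/
noncomputable def extD (n : ℕ) : PolyForm n →ₗ[ℝ] PolyForm n where
  toFun ω := fun σ => ∑ i ∈ σ, sgn σ i * pderiv i (ω (σ.erase i))
  map_add' ω η := by
    funext σ
    simp [Pi.add_apply, mul_add, Finset.sum_add_distrib]
  map_smul' c ω := by
    funext σ
    simp [Pi.smul_apply, Finset.smul_sum, mul_smul_comm]

/-- The Koszul operator `κ` (contraction with the position vector field). -/
noncomputable def koszul (n : ℕ) : PolyForm n →ₗ[ℝ] PolyForm n where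
  toFun ω := fun σ => ∑ i ∈ σᶜ, sgn σ i * X i * ω (insert i σ)
  map_add' ω η := by
    funext σ
    simp [Pi.add_apply, mul_add, Finset.sum_add_distrib]
  map_smul' c ω := by
    funext σ
    simp [Pi.smul_apply, Finset.smul_sum, mul_smul_comm]

/-- The space of (polynomial) differential `k`-forms: families supported on index sets of
cardinality `k`. -/
noncomputable def Lambda (n k : ℕ) : Submodule ℝ (PolyForm n) where
  carrier := {ω | ∀ σ, σ.card ≠ k → ω σ = 0}
  zero_mem' := fun σ _ => rfl
  add_mem' := fun ha hb σ h => by simp only [Pi.add_apply, ha σ h, hb σ h, add_zero]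
  smul_mem' := fun c ω h σ hσ => by simp only [Pi.smul_apply, h σ hσ, smul_zero]

/-- The form monomial `x^α dx_σ`. -/
noncomputable def formMonomial {n : ℕ} (α : Fin n →₀ ℕ) (σ : Finset (Fin n)) : PolyForm n :=
  fun τ => if τ = σ then monomial α 1 else 0

/-- The (total) degree `|α|` of a multi-index. -/
def mdeg {n : ℕ} (α : Fin n →₀ ℕ) : ℕ := α.sum fun _ m => m

/-- The linear degree of the form monomial `x^α dx_σ`: the number of `i ∉ σ` with `α i = 1`. -/
def ldeg {n : ℕ} (α : Fin n →₀ ℕ) (σ : Finset (Fin n)) : ℕ :=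
  ((σᶜ).filter fun i => α i = 1).card

/-- `H_rΛ^k(ℝ^n)`: `k`-forms with homogeneous degree-`r` polynomial coefficients. -/
noncomputable def Hspace (n r k : ℕ) : Submodule ℝ (PolyForm n) :=
  Submodule.span ℝ {ω | ∃ α σ, σ.card = k ∧ mdeg α = r ∧ ω = formMonomial α σ}

/-- `P_rΛ^k(ℝ^n)`: `k`-forms with polynomial coefficients of degree at most `r`. -/
noncomputable def Pspace (n r k : ℕ) : Submodule ℝ (PolyForm n) :=
  Submodule.span ℝ {ω | ∃ α σ, σ.card = k ∧ mdeg α ≤ r ∧ ω = formMonomial α σ}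

/-- `H_{r,l}Λ^k(ℝ^n)`: homogeneous degree-`r` `k`-forms of linear degree at least `l`. -/
noncomputable def Hl (n r l k : ℕ) : Submodule ℝ (PolyForm n) :=
  Submodule.span ℝ
    {ω | ∃ α σ, σ.card = k ∧ mdeg α = r ∧ l ≤ ldeg α σ ∧ ω = formMonomial α σ}

/-- `J_rΛ^k(ℝ^n) := Σ_{l ≥ 1} κ H_{r+l-1, l}Λ^{k+1}(ℝ^n)` (here `l` is reindexed as `l+1`). -/
noncomputable def Jspace (n r k : ℕ) : Submodule ℝ (PolyForm n) :=
  ⨆ l : ℕ, Submodule.map (koszul n) (Hl n (r + l) (l + 1) (k + 1))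

/-- The trimmed polynomial space `P_r^-Λ^k := P_{r-1}Λ^k ⊕ κ H_{r-1}Λ^{k+1}`. -/
noncomputable def PminusSpace (n r k : ℕ) : Submodule ℝ (PolyForm n) :=
  Pspace n (r - 1) k ⊔ Submodule.map (koszul n) (Hspace n (r - 1) (k + 1))

/-- The serendipity space `S_rΛ^k := P_rΛ^k + J_rΛ^k + d J_{r+1}Λ^{k-1}`
(the last summand being absent for `k = 0`). -/
noncomputable def Sspace (n r k : ℕ) : Submodule ℝ (PolyForm n) :=
  Pspace n r k ⊔ Jspace n r k ⊔
    (if k = 0 then ⊥ else Submodule.map (extD n) (Jspace n (r + 1) (k - 1)))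

/-- The trimmed serendipity space `S_r^-Λ^k := S_{r-1}Λ^k + κ S_{r-1}Λ^{k+1}`. -/
noncomputable def SminusSpace (n r k : ℕ) : Submodule ℝ (PolyForm n) :=
  Sspace n (r - 1) k ⊔ Submodule.map (koszul n) (Sspace n (r - 1) (k + 1))

section Aux
variable {n : ℕ}

lemma sgn_eq_C (σ : Finset (Fin n)) (i : Fin n) :
    sgn σ i = C ((-1 : ℝ) ^ (σ.filter (fun j => j < i)).card) := by
  simp [sgn, map_pow]

lemma sgn_mul_self (σ : Finset (Fin n)) (i : Fin n) : sgn σ i * sgn σ i = 1 := by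
  rw [sgn_eq_C, ← map_mul, ← map_one C]
  congr 1
  rw [← pow_add]
  exact (neg_one_pow_eq_one_iff_even (by norm_num)).2 (Even.add_self _)

lemma pderiv_sgn_mul (σ : Finset (Fin n)) (i j : Fin n) (p : MvPolynomial (Fin n) ℝ) :
    pderiv j (sgn σ i * p) = sgn σ i * pderiv j p := by
  rw [sgn_eq_C, pderiv_C_mul]

lemma sgn_insert_self (σ : Finset (Fin n)) (i : Fin n) : sgn (insert i σ) i = sgn σ i := by
  simp [sgn, Finset.filter_insert]

lemma sgn_erase_self (σ : Finset (Fin n)) (i : Fin n) : sgn (σ.erase i) i = sgn σ i := by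
  unfold sgn
  congr 2
  ext x
  simp only [Finset.mem_filter, Finset.mem_erase]
  constructor
  · rintro ⟨⟨_, h⟩, h2⟩; exact ⟨h, h2⟩
  · rintro ⟨h, h2⟩; exact ⟨⟨ne_of_lt h2, h⟩, h2⟩

lemma sgn_insert (σ : Finset (Fin n)) {i j : Fin n} (_hij : i ≠ j) (hi : i ∉ σ) :
    sgn (insert i σ) j = (if i < j then -1 else 1) * sgn σ j := by
  unfold sgn
  rw [Finset.filter_insert]
  by_cases h : i < j
  · rw [if_pos h, if_pos h, Finset.card_insert_of_notMem (by simp [hi]), pow_succ]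
    ring
  · rw [if_neg h, if_neg h, one_mul]

lemma sgn_erase (σ : Finset (Fin n)) {i j : Fin n} (hij : i ≠ j) (hj : j ∈ σ) :
    sgn (σ.erase j) i = (if j < i then -1 else 1) * sgn σ i := by
  have h2 : sgn σ i = (if j < i then -1 else 1) * sgn (σ.erase j) i := by
    conv_lhs => rw [← Finset.insert_erase hj]
    exact sgn_insert _ hij.symm (Finset.notMem_erase _ _)
  rw [h2]; split <;> ring

end Aux
section Aux2
variable {n : ℕ}

lemma extD_apply (ω : PolyForm n) (σ : Finset (Fin n)) :
    extD n ω σ = ∑ i ∈ σ, sgn σ i * pderiv i (ω (σ.erase i)) := rfl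

lemma koszul_apply (ω : PolyForm n) (σ : Finset (Fin n)) :
    koszul n ω σ = ∑ i ∈ σᶜ, sgn σ i * X i * ω (insert i σ) := rfl

lemma pderiv_comm (i j : Fin n) (p : MvPolynomial (Fin n) ℝ) :
    pderiv i (pderiv j p) = pderiv j (pderiv i p) := by
  induction p using MvPolynomial.induction_on with
  | C a => simp [pderiv_C]
  | add p q hp hq => simp [hp, hq]
  | mul_X p k hp =>
    have h1 : (pderiv i) (Pi.single (M := fun _ => MvPolynomial (Fin n) ℝ) j 1 k) = 0 := by
      rcases eq_or_ne j k with rfl | h <;> simp [Pi.single_apply, *]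
    have h2 : (pderiv j) (Pi.single (M := fun _ => MvPolynomial (Fin n) ℝ) i 1 k) = 0 := by
      rcases eq_or_ne i k with rfl | h <;> simp [Pi.single_apply, *]
    simp only [pderiv_mul, map_add, hp, pderiv_X, h1, h2]
    ring

set_option synthInstance.maxHeartbeats 1000000 in
lemma sum_antisymm (s : Finset (Fin n)) (f : Fin n → Fin n → MvPolynomial (Fin n) ℝ)
    (hf : ∀ i ∈ s, ∀ j ∈ s, i ≠ j → f i j = - f j i) :
    ∑ i ∈ s, ∑ j ∈ s.erase i, f i j = 0 := by
  set S := ∑ i ∈ s, ∑ j ∈ s.erase i, f i j with hS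
  have h1 : S = ∑ j ∈ s, ∑ i ∈ s.erase j, f i j := by
    rw [hS]
    refine Finset.sum_comm' ?_
    intro x y
    simp only [Finset.mem_erase]
    constructor
    · rintro ⟨hx, hy, hy2⟩; exact ⟨⟨(Ne.symm hy), hx⟩, hy2⟩
    · rintro ⟨⟨hy, hx⟩, hy2⟩; exact ⟨hx, Ne.symm hy, hy2⟩
  have h2 : S = -S := by
    nth_rewrite 1 [h1]
    rw [hS, ← Finset.sum_neg_distrib]
    refine Finset.sum_congr rfl fun j hj => ?_
    rw [← Finset.sum_neg_distrib]
    refine Finset.sum_congr rfl fun i hi => ?_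
    exact hf i (Finset.mem_of_mem_erase hi) j hj (Finset.ne_of_mem_erase hi)
  have h3 : (2 : ℝ) • S = 0 := by
    rw [two_smul]
    nth_rewrite 2 [h2]
    exact add_neg_cancel S
  exact (smul_eq_zero.mp h3).resolve_left two_ne_zero

lemma sgn_cancel_erase {σ : Finset (Fin n)} {i j : Fin n} (hij : i ≠ j)
    (hi : i ∈ σ) (hj : j ∈ σ) :
    sgn σ i * sgn (σ.erase i) j = -(sgn σ j * sgn (σ.erase j) i) := by
  rw [sgn_erase σ hij.symm hi, sgn_erase σ hij hj]
  rcases lt_or_gt_of_ne hij with h | h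
  · rw [if_pos h, if_neg (asymm h)]; ring
  · rw [if_neg (asymm h), if_pos h]; ring

lemma sgn_cancel_insert {σ : Finset (Fin n)} {i j : Fin n} (hij : i ≠ j)
    (hi : i ∉ σ) (hj : j ∉ σ) :
    sgn σ i * sgn (insert i σ) j = -(sgn σ j * sgn (insert j σ) i) := by
  rw [sgn_insert σ hij hi, sgn_insert σ hij.symm hj]
  rcases lt_or_gt_of_ne hij with h | h
  · rw [if_pos h, if_neg (asymm h)]; ring
  · rw [if_neg (asymm h), if_pos h]; ring

lemma sgn_cancel_mixed {σ : Finset (Fin n)} {i j : Fin n}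
    (hi : i ∉ σ) (hj : j ∈ σ) :
    sgn σ j * sgn (σ.erase j) i = -(sgn σ i * sgn (insert i σ) j) := by
  have hij : i ≠ j := fun h => hi (h ▸ hj)
  rw [sgn_erase σ hij hj, sgn_insert σ hij hi]
  rcases lt_or_gt_of_ne hij with h | h
  · rw [if_pos h, if_neg (asymm h)]; ring
  · rw [if_neg (asymm h), if_pos h]; ring

lemma extD_extD (η : PolyForm n) : extD n (extD n η) = 0 := by
  funext σ
  rw [extD_apply]
  have step : ∀ i ∈ σ, sgn σ i * pderiv i (extD n η (σ.erase i)) =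
      ∑ j ∈ σ.erase i, sgn σ i * (sgn (σ.erase i) j *
        pderiv i (pderiv j (η ((σ.erase i).erase j)))) := by
    intro i _
    rw [extD_apply, map_sum, Finset.mul_sum]
    refine Finset.sum_congr rfl fun j _ => ?_
    rw [pderiv_sgn_mul]
  rw [Finset.sum_congr rfl step]
  show _ = (0 : PolyForm n) σ
  rw [show (0 : PolyForm n) σ = 0 from rfl]
  refine sum_antisymm σ _ fun i hi j hj hij => ?_
  rw [show (σ.erase i).erase j = (σ.erase j).erase i from Finset.erase_right_comm, pderiv_comm, ← mul_assoc, ← mul_assoc,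
    sgn_cancel_erase hij hi hj]
  ring

lemma koszul_koszul (μ : PolyForm n) : koszul n (koszul n μ) = 0 := by
  funext σ
  rw [koszul_apply]
  have step : ∀ i ∈ σᶜ, sgn σ i * X i * koszul n μ (insert i σ) =
      ∑ j ∈ σᶜ.erase i, sgn σ i * X i * (sgn (insert i σ) j * X j *
        μ (insert j (insert i σ))) := by
    intro i hi
    rw [koszul_apply, Finset.mul_sum, Finset.compl_insert]
  rw [Finset.sum_congr rfl step]
  show _ = (0 : PolyForm n) σ
  rw [show (0 : PolyForm n) σ = 0 from rfl]
  refine sum_antisymm σᶜ _ fun i hi j hj hij => ?_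
  rw [show insert j (insert i σ) = insert i (insert j σ) from by ext x; simp only [Finset.mem_insert]; tauto]
  have := sgn_cancel_insert hij (Finset.mem_compl.mp hi) (Finset.mem_compl.mp hj)
  calc sgn σ i * X i * (sgn (insert i σ) j * X j * μ (insert i (insert j σ)))
      = (sgn σ i * sgn (insert i σ) j) * (X i * X j * μ (insert i (insert j σ))) := by ring
    _ = -((sgn σ j * sgn (insert j σ) i) * (X i * X j * μ (insert i (insert j σ)))) := by
        rw [this]; ring
    _ = -(sgn σ j * X j * (sgn (insert j σ) i * X i * μ (insert i (insert j σ)))) := by ring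

end Aux2
section Aux3
variable {n : ℕ}

lemma homotopy (ω : PolyForm n) (σ : Finset (Fin n)) :
    extD n (koszul n ω) σ + koszul n (extD n ω) σ =
      σ.card • ω σ + ∑ i : Fin n, X i * pderiv i (ω σ) := by
  have hA : extD n (koszul n ω) σ =
      ∑ j ∈ σ, (ω σ + X j * pderiv j (ω σ)) +
      ∑ j ∈ σ, ∑ i ∈ σᶜ, (sgn σ j * sgn (σ.erase j) i) *
        (X i * pderiv j (ω (insert i (σ.erase j)))) := by
    rw [extD_apply, ← Finset.sum_add_distrib]
    refine Finset.sum_congr rfl fun j hj => ?_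
    rw [koszul_apply, map_sum, Finset.mul_sum, Finset.compl_erase,
      Finset.sum_insert (Finset.notMem_compl.mpr hj)]
    congr 1
    · -- diagonal term i = j
      rw [sgn_erase_self, Finset.insert_erase hj, mul_assoc, pderiv_sgn_mul,
        ← mul_assoc, sgn_mul_self, one_mul, pderiv_mul, pderiv_X_self, one_mul]
    · refine Finset.sum_congr rfl fun i hi => ?_
      have hij : i ≠ j := fun h => (Finset.mem_compl.mp hi) (h ▸ hj)
      rw [mul_assoc, pderiv_sgn_mul, pderiv_mul, pderiv_X_of_ne hij, zero_mul, zero_add]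
      ring
  have hB : koszul n (extD n ω) σ =
      ∑ i ∈ σᶜ, X i * pderiv i (ω σ) +
      ∑ i ∈ σᶜ, ∑ j ∈ σ, (sgn σ i * sgn (insert i σ) j) *
        (X i * pderiv j (ω ((insert i σ).erase j))) := by
    rw [koszul_apply, ← Finset.sum_add_distrib]
    refine Finset.sum_congr rfl fun i hi => ?_
    have hins : i ∉ σ := Finset.mem_compl.mp hi
    rw [extD_apply, Finset.mul_sum, Finset.sum_insert hins]
    congr 1
    · rw [sgn_insert_self, Finset.erase_insert hins]
      calc sgn σ i * X i * (sgn σ i * pderiv i (ω σ))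
          = (sgn σ i * sgn σ i) * (X i * pderiv i (ω σ)) := by ring
        _ = X i * pderiv i (ω σ) := by rw [sgn_mul_self, one_mul]
    · refine Finset.sum_congr rfl fun j hj => ?_
      ring
  have hcancel : ∑ j ∈ σ, ∑ i ∈ σᶜ, (sgn σ j * sgn (σ.erase j) i) *
        (X i * pderiv j (ω (insert i (σ.erase j)))) +
      ∑ i ∈ σᶜ, ∑ j ∈ σ, (sgn σ i * sgn (insert i σ) j) *
        (X i * pderiv j (ω ((insert i σ).erase j))) = 0 := by
    rw [Finset.sum_comm (s := σᶜ) (t := σ), ← Finset.sum_add_distrib]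
    refine Finset.sum_eq_zero fun j hj => ?_
    rw [← Finset.sum_add_distrib]
    refine Finset.sum_eq_zero fun i hi => ?_
    have hins : i ∉ σ := Finset.mem_compl.mp hi
    have hij : i ≠ j := fun h => hins (h ▸ hj)
    rw [Finset.erase_insert_of_ne hij, sgn_cancel_mixed hins hj]
    ring
  rw [hA, hB]
  have : ∑ j ∈ σ, (ω σ + X j * pderiv j (ω σ)) =
      σ.card • ω σ + ∑ j ∈ σ, X j * pderiv j (ω σ) := by
    rw [Finset.sum_add_distrib, Finset.sum_const]
  rw [this]
  have huniv : ∑ j ∈ σ, X j * pderiv j (ω σ) + ∑ i ∈ σᶜ, X i * pderiv i (ω σ) =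
      ∑ i : Fin n, X i * pderiv i (ω σ) := Finset.sum_add_sum_compl σ _
  calc σ.card • ω σ + ∑ j ∈ σ, X j * pderiv j (ω σ) + _ + (∑ i ∈ σᶜ, X i * pderiv i (ω σ) + _)
      = σ.card • ω σ + (∑ j ∈ σ, X j * pderiv j (ω σ) + ∑ i ∈ σᶜ, X i * pderiv i (ω σ)) +
        (∑ j ∈ σ, ∑ i ∈ σᶜ, (sgn σ j * sgn (σ.erase j) i) *
          (X i * pderiv j (ω (insert i (σ.erase j)))) +
        ∑ i ∈ σᶜ, ∑ j ∈ σ, (sgn σ i * sgn (insert i σ) j) *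
          (X i * pderiv j (ω ((insert i σ).erase j)))) := by ring
    _ = σ.card • ω σ + ∑ i : Fin n, X i * pderiv i (ω σ) := by rw [huniv, hcancel, add_zero]

lemma mdeg_eq_sum (α : Fin n →₀ ℕ) : mdeg α = ∑ i : Fin n, α i := by
  rw [mdeg, Finsupp.sum]
  exact Finset.sum_subset (Finset.subset_univ _)
    (fun i _ hi => Finsupp.notMem_support_iff.mp hi)

lemma euler_monomial (s : Fin n →₀ ℕ) (a : ℝ) :
    ∑ i : Fin n, X i * pderiv i (monomial s a) = monomial s ((mdeg s : ℝ) * a) := by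
  have step : ∀ i : Fin n, X i * pderiv i (monomial s a) = monomial s ((s i : ℝ) * a) := by
    intro i
    rw [pderiv_monomial]
    rcases Nat.eq_zero_or_pos (s i) with h | h
    · simp [h]
    · rw [X, monomial_mul, one_mul, add_tsub_cancel_of_le
        (Finsupp.single_le_iff.mpr h), mul_comm a]
  rw [Finset.sum_congr rfl fun i _ => step i, ← map_sum, ← Finset.sum_mul,
    mdeg_eq_sum, Nat.cast_sum]

lemma euler_coeff (p : MvPolynomial (Fin n) ℝ) (α : Fin n →₀ ℕ) :
    coeff α (∑ i : Fin n, X i * pderiv i p) = (mdeg α : ℝ) * coeff α p := by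
  induction p using MvPolynomial.induction_on' with
  | monomial s a =>
    rw [euler_monomial]
    rcases eq_or_ne s α with rfl | h
    · simp [coeff_monomial]
    · simp [coeff_monomial, h]
  | add p q hp hq =>
    simp only [map_add, mul_add, Finset.sum_add_distrib, coeff_add, hp, hq]
    try ring

end Aux3
/-- a polynomial `k`-form lying both in the image of `κ` (on polynomial
`(k+1)`-forms) and in the image of `d` (on polynomial `(k-1)`-forms) is zero. -/
theorem image_koszul_inter_image_extD (n k : ℕ) (ω : PolyForm n) (hω : ω ∈ Lambda n k)
    (hκ : ∃ μ ∈ Lambda n (k + 1), koszul n μ = ω)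
    (hd : ∃ η ∈ Lambda n (k - 1), extD n η = ω) :
    ω = 0 := by
  obtain ⟨μ, -, hμω⟩ := hκ
  obtain ⟨η, -, hηω⟩ := hd
  have hκω : koszul n ω = 0 := by rw [← hμω]; exact koszul_koszul μ
  have hdω : extD n ω = 0 := by rw [← hηω]; exact extD_extD η
  funext σ
  rcases eq_or_ne σ ∅ with rfl | hσ
  · rw [← hηω, extD_apply]
    simp
  · have h := homotopy ω σ
    rw [hκω, hdω, map_zero, map_zero] at h
    have h0 : (0 : MvPolynomial (Fin n) ℝ) = σ.card • ω σ + ∑ i : Fin n, X i * pderiv i (ω σ) := by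
      rw [← h, Pi.zero_apply, add_zero]
    have hc : 0 < σ.card := Finset.card_pos.mpr (Finset.nonempty_of_ne_empty hσ)
    show ω σ = 0
    ext α
    have h1 := congrArg (coeff α) h0
    rw [coeff_zero, coeff_add, coeff_smul, euler_coeff, nsmul_eq_mul] at h1
    have h2 : ((σ.card : ℝ) + (mdeg α : ℝ)) * coeff α (ω σ) = 0 := by
      rw [add_mul, ← h1]
    have h3 : ((σ.card : ℝ) + (mdeg α : ℝ)) ≠ 0 := by
      have : (0 : ℝ) < (σ.card : ℝ) := Nat.cast_pos.mpr hc
      have h4 : (0 : ℝ) ≤ (mdeg α : ℝ) := Nat.cast_nonneg _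
      linarith
    rw [coeff_zero]
    exact (mul_eq_zero.mp h2).resolve_left h3
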